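/- Let A and B be d×d positive definite Hermitian matrices and λ ≥ 0. Suppose that for every C in the segment [A,B] := {αA + (1−α)B : α ∈ [0,1]} one has Tr((A−B)C^{-1}(A−B)C^{-1}) ≤ λ². Then for all D, E ∈ [A,B]: D ⪯ (1+λ)E and D^{-1} ⪯ (1+λ)E^{-1}. -/

import Mathlib

open Matrix
open scoped ComplexOrder

namespace Stmt3Aux

variable {d : ℕ}

lemma psd_smul {A : Matrix (Fin d) (Fin d) ℂ} (hA : A.PosSemidef) {r : ℝ} (hr : 0 ≤ r) :
    (r • A).PosSemidef := by
  constructor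
  · have h1 := hA.1
    simp only [Matrix.IsHermitian, conjTranspose_smul, star_trivial] at *
    rw [h1]
  · exact (hA.smul hr).2

lemma pd_smul {A : Matrix (Fin d) (Fin d) ℂ} (hA : A.PosDef) {r : ℝ} (hr : 0 < r) :
    (r • A).PosDef := by
  constructor
  · have h1 := hA.1
    simp only [Matrix.IsHermitian, conjTranspose_smul, star_trivial] at *
    rw [h1]
  · intro x hx
    exact (hA.smul hr).2 hx

lemma pd_comb {A B : Matrix (Fin d) (Fin d) ℂ} (hA : A.PosDef) (hB : B.PosDef)
    {α : ℝ} (h0 : 0 ≤ α) (h1 : α ≤ 1) : (α • A + (1 - α) • B).PosDef := by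
  rcases eq_or_lt_of_le h0 with h | h
  · simpa [← h] using hB
  · exact (pd_smul hA h).add_posSemidef (psd_smul hB.posSemidef (by linarith))


lemma smul_one_sub_psd {M : Matrix (Fin d) (Fin d) ℂ} (hM : M.IsHermitian) {lam : ℝ}
    (hlam : 0 ≤ lam) (h : (M * M).trace.re ≤ lam ^ 2) :
    (lam • (1 : Matrix (Fin d) (Fin d) ℂ) - M).PosSemidef := by
  set U : Matrix (Fin d) (Fin d) ℂ := (hM.eigenvectorUnitary : Matrix (Fin d) (Fin d) ℂ) with hU
  have hU1 : U * star U = 1 := Matrix.mem_unitaryGroup_iff.mp hM.eigenvectorUnitary.2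
  have hU2 : star U * U = 1 := Matrix.mem_unitaryGroup_iff'.mp hM.eigenvectorUnitary.2
  set μ := hM.eigenvalues with hμ
  set Dg : Matrix (Fin d) (Fin d) ℂ := diagonal (Complex.ofReal ∘ μ) with hDg
  have hspec : M = U * Dg * star U := hM.spectral_theorem
  -- trace computation
  have htr : (M * M).trace.re = ∑ i, μ i ^ 2 := by
    have e1 : M * M = U * (Dg * Dg) * star U := by
      rw [hspec]
      calc U * Dg * star U * (U * Dg * star U)
          = U * Dg * (star U * U) * Dg * star U := by noncomm_ring
        _ = U * (Dg * Dg) * star U := by rw [hU2]; noncomm_ring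
    rw [e1, trace_mul_cycle, ← Matrix.mul_assoc, hU2, Matrix.one_mul]
    rw [hDg, diagonal_mul_diagonal, trace_diagonal]
    rw [Complex.re_sum]
    apply Finset.sum_congr rfl
    intro i _
    simp [pow_two, ← Complex.ofReal_mul]
  have hev : ∀ i, μ i ≤ lam := by
    intro i
    have h1 : μ i ^ 2 ≤ ∑ j, μ j ^ 2 :=
      Finset.single_le_sum (fun j _ => sq_nonneg (μ j)) (Finset.mem_univ i)
    have h2 : μ i ^ 2 ≤ lam ^ 2 := by rw [← htr] at h1; linarith
    nlinarith [sq_nonneg (μ i + lam)]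
  -- rewrite lam • 1 - M
  have hdiag : lam • (1 : Matrix (Fin d) (Fin d) ℂ) - Dg
      = diagonal (fun i => ((lam - μ i : ℝ) : ℂ)) := by
    ext i j
    by_cases hij : i = j <;>
      simp [hDg, hij, diagonal_apply, Matrix.one_apply, Complex.real_smul, Complex.ofReal_sub]
  have heq : lam • (1 : Matrix (Fin d) (Fin d) ℂ) - M
      = U * diagonal (fun i => ((lam - μ i : ℝ) : ℂ)) * star U := by
    rw [← hdiag, Matrix.mul_sub, Matrix.sub_mul, mul_smul_comm, smul_mul_assoc,
      Matrix.mul_one, hU1, ← hspec]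
  rw [heq]
  have hdpsd : (diagonal (fun i => ((lam - μ i : ℝ) : ℂ))).PosSemidef := by
    apply Matrix.PosSemidef.diagonal
    intro i
    exact Complex.zero_le_real.mpr (by linarith [hev i])
  exact hdpsd.mul_mul_conjTranspose_same U

lemma key {C Δ : Matrix (Fin d) (Fin d) ℂ} (hC : C.PosDef) (hΔ : Δ.IsHermitian) {lam : ℝ}
    (hlam : 0 ≤ lam) (h : (Δ * C⁻¹ * Δ * C⁻¹).trace.re ≤ lam ^ 2) :
    (lam • C - Δ).PosSemidef := by
  have hCdet : IsUnit C.det := hC.det_pos.ne'.isUnit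
  obtain ⟨R, hRh, hR2⟩ : ∃ R : Matrix (Fin d) (Fin d) ℂ, R.IsHermitian ∧ R * R = C⁻¹ := by
    open scoped MatrixOrder in
    exact ⟨CFC.sqrt C⁻¹, (CFC.sqrt_nonneg _).posSemidef.1,
      CFC.sqrt_mul_sqrt_self _ hC.inv.posSemidef.nonneg⟩
  have hR1 : R * (R * C) = 1 := by
    rw [← Matrix.mul_assoc, hR2, Matrix.nonsing_inv_mul _ hCdet]
  have hRdet : IsUnit R.det := Matrix.isUnit_det_of_right_inverse hR1
  have hRinvh : (R⁻¹).IsHermitian := by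
    unfold Matrix.IsHermitian
    rw [conjTranspose_nonsing_inv, hRh.eq]
  have hM : (R * Δ * R).IsHermitian := by
    unfold Matrix.IsHermitian
    rw [conjTranspose_mul, conjTranspose_mul, hRh.eq, hΔ.eq, Matrix.mul_assoc]
  have htr : ((R * Δ * R) * (R * Δ * R)).trace.re = (Δ * C⁻¹ * Δ * C⁻¹).trace.re := by
    have e1 : (R * Δ * R) * (R * Δ * R) = R * (Δ * (R * R) * Δ) * R := by noncomm_ring
    rw [e1, hR2, trace_mul_cycle, ← Matrix.mul_assoc, hR2]
    rw [Matrix.trace_mul_comm]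
    congr 1
    noncomm_ring
  have hpsd1 := smul_one_sub_psd hM hlam (by rw [htr]; exact h)
  have heq : (R⁻¹)ᴴ * (lam • (1 : Matrix (Fin d) (Fin d) ℂ) - R * Δ * R) * R⁻¹
      = lam • C - Δ := by
    rw [hRinvh.eq, Matrix.mul_sub, Matrix.sub_mul]
    congr 1
    · rw [mul_smul_comm, smul_mul_assoc, Matrix.mul_one]
      congr 1
      rw [← Matrix.mul_inv_rev, hR2, Matrix.nonsing_inv_nonsing_inv _ hCdet]
    · rw [show R⁻¹ * (R * Δ * R) * R⁻¹ = (R⁻¹ * R) * Δ * (R * R⁻¹) by noncomm_ring,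
        Matrix.nonsing_inv_mul _ hRdet, Matrix.mul_nonsing_inv _ hRdet,
        Matrix.one_mul, Matrix.mul_one]
  rw [← heq]
  exact hpsd1.conjTranspose_mul_mul_same R⁻¹

lemma pd_conj {Y N : Matrix (Fin d) (Fin d) ℂ} (hY : Y.PosDef) (hN : IsUnit N.det) :
    (Nᴴ * Y * N).PosDef := by
  refine Matrix.PosDef.of_dotProduct_mulVec_pos ?_ ?_
  · exact isHermitian_conjTranspose_mul_mul N hY.1
  · intro x hx
    have hinj : Function.Injective (N.mulVec) := by
      have : Invertible N := N.invertibleOfIsUnitDet hN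
      exact Matrix.mulVec_injective_of_invertible N
    have hNx : N *ᵥ x ≠ 0 := fun hc => hx (hinj (by simpa using hc))
    have e : star x ⬝ᵥ ((Nᴴ * Y * N) *ᵥ x) = star (N *ᵥ x) ⬝ᵥ (Y *ᵥ (N *ᵥ x)) := by
      simp only [star_mulVec, dotProduct_mulVec, vecMul_vecMul]
    rw [e]
    exact hY.dotProduct_mulVec_pos hNx

lemma inv_antitone {X Y : Matrix (Fin d) (Fin d) ℂ} (hX : X.PosDef) (hY : Y.PosDef)
    (h : (Y - X).PosSemidef) : (X⁻¹ - Y⁻¹).PosSemidef := by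
  have hXdet : IsUnit X.det := hX.det_pos.ne'.isUnit
  obtain ⟨T, hTh, hT2⟩ : ∃ T : Matrix (Fin d) (Fin d) ℂ, T.IsHermitian ∧ T * T = X⁻¹ := by
    open scoped MatrixOrder in
    exact ⟨CFC.sqrt X⁻¹, (CFC.sqrt_nonneg _).posSemidef.1,
      CFC.sqrt_mul_sqrt_self _ hX.inv.posSemidef.nonneg⟩
  have hT1 : T * (T * X) = 1 := by
    rw [← Matrix.mul_assoc, hT2, Matrix.nonsing_inv_mul _ hXdet]
  have hTdet : IsUnit T.det := Matrix.isUnit_det_of_right_inverse hT1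
  have hTXT : T * X * T = 1 := by
    have hX' : X = (T * T)⁻¹ := by rw [hT2, Matrix.nonsing_inv_nonsing_inv _ hXdet]
    rw [hX', Matrix.mul_inv_rev,
      show T * (T⁻¹ * T⁻¹) * T = (T * T⁻¹) * (T⁻¹ * T) by noncomm_ring,
      Matrix.mul_nonsing_inv _ hTdet, Matrix.nonsing_inv_mul _ hTdet, Matrix.one_mul]
  -- N := T * Y * T is PD
  have hNpd : (T * Y * T).PosDef := by
    have := pd_conj hY hTdet
    rwa [hTh.eq] at this
  set N := T * Y * T with hNdef
  have hNdet : IsUnit N.det := hNpd.det_pos.ne'.isUnit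
  have hNh : N.IsHermitian := hNpd.1
  -- N - 1 is PSD
  have hN1 : (N - 1).PosSemidef := by
    have := h.conjTranspose_mul_mul_same T
    rwa [hTh.eq, Matrix.mul_sub, Matrix.sub_mul, hTXT] at this
  -- spectral analysis of N
  set U : Matrix (Fin d) (Fin d) ℂ := (hNh.eigenvectorUnitary : Matrix (Fin d) (Fin d) ℂ) with hU
  have hU1 : U * star U = 1 := Matrix.mem_unitaryGroup_iff.mp hNh.eigenvectorUnitary.2
  have hU2 : star U * U = 1 := Matrix.mem_unitaryGroup_iff'.mp hNh.eigenvectorUnitary.2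
  set ν := hNh.eigenvalues with hν
  have hνpos : ∀ i, 0 < ν i := hNpd.eigenvalues_pos
  have hdiagN : star U * N * U = diagonal (Complex.ofReal ∘ ν) :=
    by
      have := hNh.conjStarAlgAut_star_eigenvectorUnitary
      rwa [Unitary.conjStarAlgAut_apply, Unitary.coe_star, star_star] at this
  -- eigenvalues ≥ 1
  have hν1 : ∀ i, 1 ≤ ν i := by
    intro i
    have hpsd := hN1.conjTranspose_mul_mul_same U
    have e : Uᴴ * (N - 1) * U = diagonal (fun i => ((ν i - 1 : ℝ) : ℂ)) := by
      rw [show Uᴴ = star U from rfl, Matrix.mul_sub, Matrix.sub_mul, hdiagN,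
        Matrix.mul_one, hU2]
      ext a b
      by_cases hab : a = b <;> simp [diagonal_apply, Matrix.one_apply, hab,
        Complex.ofReal_sub]
    rw [e] at hpsd
    have := (Matrix.posSemidef_diagonal_iff.mp hpsd) i
    have := Complex.zero_le_real.mp this
    linarith
  -- inverse of N
  have hNinv : N⁻¹ = U * diagonal (fun i => (((ν i)⁻¹ : ℝ) : ℂ)) * star U := by
    apply Matrix.inv_eq_right_inv
    have hspec : N = U * diagonal (Complex.ofReal ∘ ν) * star U := hNh.spectral_theorem
    rw [hspec]
    calc U * diagonal (Complex.ofReal ∘ ν) * star U *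
          (U * diagonal (fun i => (((ν i)⁻¹ : ℝ) : ℂ)) * star U)
        = U * (diagonal (Complex.ofReal ∘ ν) * (star U * U) *
            diagonal (fun i => (((ν i)⁻¹ : ℝ) : ℂ))) * star U := by noncomm_ring
      _ = 1 := by
          rw [hU2, Matrix.mul_one, diagonal_mul_diagonal]
          have : (fun i => (Complex.ofReal ∘ ν) i * (((ν i)⁻¹ : ℝ) : ℂ)) = fun _ => 1 := by
            funext i
            simp only [Function.comp_apply, ← Complex.ofReal_mul]
            rw [mul_inv_cancel₀ (hνpos i).ne']
            simp
          rw [this, diagonal_one, Matrix.mul_one, hU1]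
  -- 1 - N⁻¹ is PSD
  have hkey : ((1 : Matrix (Fin d) (Fin d) ℂ) - N⁻¹).PosSemidef := by
    have hdd : diagonal (fun i => ((1 - (ν i)⁻¹ : ℝ) : ℂ))
        = 1 - diagonal (fun i => (((ν i)⁻¹ : ℝ) : ℂ)) := by
      ext a b
      by_cases hab : a = b <;> simp [diagonal_apply, Matrix.one_apply, hab,
        Complex.ofReal_sub]
    have e : (1 : Matrix (Fin d) (Fin d) ℂ) - N⁻¹
        = U * diagonal (fun i => ((1 - (ν i)⁻¹ : ℝ) : ℂ)) * star U := by
      rw [hNinv, hdd, Matrix.mul_sub, Matrix.sub_mul, Matrix.mul_one, hU1]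
    rw [e]
    have hdpsd : (diagonal (fun i => ((1 - (ν i)⁻¹ : ℝ) : ℂ))).PosSemidef := by
      apply Matrix.PosSemidef.diagonal
      intro i
      refine Complex.zero_le_real.mpr ?_
      have h1 := hν1 i
      have h2 := hνpos i
      have : (ν i)⁻¹ ≤ 1 := by
        rw [inv_le_one_iff₀]
        right; exact h1
      linarith
    exact hdpsd.mul_mul_conjTranspose_same U
  -- transport back
  have efin : X⁻¹ - Y⁻¹ = Tᴴ * ((1 : Matrix (Fin d) (Fin d) ℂ) - N⁻¹) * T := by
    rw [hTh.eq, Matrix.mul_sub, Matrix.sub_mul, Matrix.mul_one]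
    congr 1
    · exact hT2.symm
    · rw [hNdef, Matrix.mul_inv_rev, Matrix.mul_inv_rev,
        show T * (T⁻¹ * (Y⁻¹ * T⁻¹)) * T = (T * T⁻¹) * Y⁻¹ * (T⁻¹ * T) by noncomm_ring,
        Matrix.mul_nonsing_inv _ hTdet, Matrix.nonsing_inv_mul _ hTdet,
        Matrix.one_mul, Matrix.mul_one]
  rw [efin]
  exact hkey.conjTranspose_mul_mul_same T
end Stmt3Aux

open Matrix
open scoped ComplexOrder

/-- Let `A, B` be PD Hermitian and `λ ≥ 0`. If for every `C = αA + (1−α)B`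
with `α ∈ [0,1]` one has `Tr((A−B)C⁻¹(A−B)C⁻¹) ≤ λ²`, then for all
`D, E ∈ [A,B]` (the segment): `D ⪯ (1+λ)E` and `D⁻¹ ⪯ (1+λ)E⁻¹`. -/
theorem stmt3 (d : ℕ) (A B : Matrix (Fin d) (Fin d) ℂ) (lam : ℝ)
    (hA : A.PosDef) (hB : B.PosDef) (hlam : 0 ≤ lam)
    (htr : ∀ α : ℝ, 0 ≤ α → α ≤ 1 →
      ((A - B) * (α • A + (1 - α) • B)⁻¹ * (A - B) * (α • A + (1 - α) • B)⁻¹).trace.re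
        ≤ lam ^ 2) :
    ∀ αD αE : ℝ, 0 ≤ αD → αD ≤ 1 → 0 ≤ αE → αE ≤ 1 →
      ((1 + lam) • (αE • A + (1 - αE) • B) - (αD • A + (1 - αD) • B)).PosSemidef ∧
      ((1 + lam) • (αE • A + (1 - αE) • B)⁻¹ - (αD • A + (1 - αD) • B)⁻¹).PosSemidef := by
  intro αD αE hD0 hD1 hE0 hE1
  set Δ := A - B with hΔdef
  have hΔh : Δ.IsHermitian := hA.1.sub hB.1
  have hCpd : ∀ α : ℝ, 0 ≤ α → α ≤ 1 → (α • A + (1 - α) • B).PosDef :=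
    fun α h0 h1 => Stmt3Aux.pd_comb hA hB h0 h1
  have hkey : ∀ α : ℝ, 0 ≤ α → α ≤ 1 →
      (lam • (α • A + (1 - α) • B) - Δ).PosSemidef ∧
      (lam • (α • A + (1 - α) • B) + Δ).PosSemidef := by
    intro α h0 h1
    refine ⟨Stmt3Aux.key (hCpd α h0 h1) hΔh hlam (htr α h0 h1), ?_⟩
    have hneg : ((-Δ) * (α • A + (1 - α) • B)⁻¹ * (-Δ) * (α • A + (1 - α) • B)⁻¹).trace.re
        = (Δ * (α • A + (1 - α) • B)⁻¹ * Δ * (α • A + (1 - α) • B)⁻¹).trace.re := by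
      congr 2
      noncomm_ring
    have := Stmt3Aux.key (hCpd α h0 h1) hΔh.neg hlam (by rw [hneg]; exact htr α h0 h1)
    rwa [sub_neg_eq_add] at this
  have main1 : ∀ β γ : ℝ, 0 ≤ β → β ≤ 1 → 0 ≤ γ → γ ≤ 1 →
      ((1 + lam) • (γ • A + (1 - γ) • B) - (β • A + (1 - β) • B)).PosSemidef := by
    intro β γ hb0 hb1 hg0 hg1
    obtain ⟨hk1, hk2⟩ := hkey γ hg0 hg1
    have hdecomp : (1 + lam) • (γ • A + (1 - γ) • B) - (β • A + (1 - β) • B)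
        = ((1 + (β - γ)) / 2) • (lam • (γ • A + (1 - γ) • B) - Δ)
          + ((1 - (β - γ)) / 2) • (lam • (γ • A + (1 - γ) • B) + Δ) := by
      rw [hΔdef]
      module
    rw [hdecomp]
    exact (Stmt3Aux.psd_smul hk1 (by linarith)).add
      (Stmt3Aux.psd_smul hk2 (by linarith))
  refine ⟨main1 αD αE hD0 hD1 hE0 hE1, ?_⟩
  have hEpd := hCpd αE hE0 hE1
  have hDpd := hCpd αD hD0 hD1
  have hlp : (0:ℝ) < 1 + lam := by linarith
  have hscaled : ((1 + lam) • (αD • A + (1 - αD) • B)).PosDef := Stmt3Aux.pd_smul hDpd hlp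
  have h21 := main1 αE αD hE0 hE1 hD0 hD1
  have hanti := Stmt3Aux.inv_antitone hEpd hscaled h21
  have hDdet : IsUnit (αD • A + (1 - αD) • B).det := hDpd.det_pos.ne'.isUnit
  have hinv : ((1 + lam) • (αD • A + (1 - αD) • B))⁻¹
      = (1 + lam)⁻¹ • (αD • A + (1 - αD) • B)⁻¹ := by
    apply Matrix.inv_eq_right_inv
    rw [smul_mul_assoc, mul_smul_comm, smul_smul, Matrix.mul_nonsing_inv _ hDdet,
      mul_inv_cancel₀ hlp.ne', one_smul]
  have hfin : (1 + lam) • ((αE • A + (1 - αE) • B)⁻¹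
        - ((1 + lam) • (αD • A + (1 - αD) • B))⁻¹)
      = (1 + lam) • (αE • A + (1 - αE) • B)⁻¹ - (αD • A + (1 - αD) • B)⁻¹ := by
    rw [hinv, smul_sub, smul_smul, mul_inv_cancel₀ hlp.ne', one_smul]
  rw [← hfin]
  exact Stmt3Aux.psd_smul hanti (le_of_lt hlp)
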